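/- For every g ≥ 1, the first four entries of the first column of the g-th power of the 8×8 AGL₁ matrix M over Q(q) are (1, (q−1)^{2g} − 1, (q^{2g} − 1)/(q−1), ((q^{2g−2} − 1)((q−1)^{2g} − 1))/(q−1)). -/

import Mathlib

/-- The variable `q`, viewed in the field of rational functions `ℚ(q)`. -/
noncomputable def qr : RatFunc ℚ := RatFunc.X

/-- The 8×8 matrix of `Z'(holed torus)` for `AGL₁(k)`, over `ℚ(q)`. -/
noncomputable def M8 : Matrix (Fin 8) (Fin 8) (RatFunc ℚ) :=
  !![1, 0, 0, 0, 0, 0, 0, 0;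
     qr * (qr - 2), (qr - 1) ^ 2, 0, 0, 0, 0, 0, 0;
     qr + 1, 0, qr ^ 2, 0, 0, 0, 0, 0;
     0, qr ^ 2 - qr + 1, qr * (qr - 2), qr ^ 2 * (qr - 1), qr * (qr - 2), qr ^ 2 * (qr - 2),
       qr * (qr - 2) * (qr - 1), qr ^ 2 * (qr - 2) * (qr - 1);
     0, 0, 0, 0, qr ^ 2, 0, 0, 0;
     qr * (qr - 2), qr * (qr - 2), 0, 0, qr * (qr - 2) * (qr - 1),
       qr * (qr ^ 2 - 2 * qr + 2), 0, 0;
     0, 0, 0, 0, 0, 0, qr ^ 2, 0;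
     0, qr * (qr - 2), qr * (qr - 2), qr ^ 2 * (qr - 2), 0, qr * (qr - 2) * (qr - 1),
       qr * (qr - 2) * (qr - 1), qr ^ 2 * (qr ^ 2 - 3 * qr + 3)]

lemma aux_ne_zero (p : Polynomial ℚ) (hp : p.eval 0 ≠ 0) :
    algebraMap (Polynomial ℚ) (RatFunc ℚ) p ≠ 0 := by
  apply RatFunc.algebraMap_ne_zero
  intro h
  rw [h] at hp
  simp at hp

lemma hq1 : qr - (1 : RatFunc ℚ) ≠ 0 := by
  have : qr - 1 = algebraMap (Polynomial ℚ) (RatFunc ℚ) (Polynomial.X - 1) := by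
    simp [qr, RatFunc.algebraMap_X]
  rw [this]
  apply aux_ne_zero
  simp

lemma hD : qr * (qr ^ 2 - 2 * qr + 2) - (qr - 1) ^ 2 ≠ 0 := by
  have : qr * (qr ^ 2 - 2 * qr + 2) - (qr - 1) ^ 2 =
      algebraMap (Polynomial ℚ) (RatFunc ℚ)
        (Polynomial.X * (Polynomial.X ^ 2 - 2 * Polynomial.X + 2) - (Polynomial.X - 1) ^ 2) := by
    simp [qr, RatFunc.algebraMap_X, map_ofNat]
  rw [this]
  apply aux_ne_zero
  simp

lemma cons_val_five {α : Type*} {m : ℕ} (x : α) (u : Fin (m + 5) → α) :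
    Matrix.vecCons x u 5 = Matrix.vecHead (Matrix.vecTail (Matrix.vecTail
      (Matrix.vecTail (Matrix.vecTail u)))) := rfl

lemma cons_val_six {α : Type*} {m : ℕ} (x : α) (u : Fin (m + 6) → α) :
    Matrix.vecCons x u 6 = Matrix.vecHead (Matrix.vecTail (Matrix.vecTail
      (Matrix.vecTail (Matrix.vecTail (Matrix.vecTail u))))) := rfl

lemma cons_val_seven {α : Type*} {m : ℕ} (x : α) (u : Fin (m + 7) → α) :
    Matrix.vecCons x u 7 = Matrix.vecHead (Matrix.vecTail (Matrix.vecTail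
      (Matrix.vecTail (Matrix.vecTail (Matrix.vecTail (Matrix.vecTail u)))))) := rfl

/-- closed form of the first column of `M8 ^ (n+1)`. -/
noncomputable def col8 (n : ℕ) : Fin 8 → RatFunc ℚ :=
  ![1,
    (qr - 1) ^ (2 * n + 2) - 1,
    (qr ^ (2 * n + 2) - 1) / (qr - 1),
    ((qr ^ (2 * n) - 1) * ((qr - 1) ^ (2 * n + 2) - 1)) / (qr - 1),
    0,
    qr * (qr - 2) * ((qr * (qr ^ 2 - 2 * qr + 2)) ^ (n + 1) - (qr - 1) ^ (2 * n + 2)) /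
      (qr * (qr ^ 2 - 2 * qr + 2) - (qr - 1) ^ 2),
    0,
    qr * (qr - 2) * ((qr - 1) ^ (2 * n + 2) - (qr * (qr ^ 2 - 2 * qr + 2)) ^ (n + 1)) /
      ((qr - 1) * (qr * (qr ^ 2 - 2 * qr + 2) - (qr - 1) ^ 2)) +
      qr ^ (2 * n) * ((qr - 1) ^ (2 * n + 2) - 1) / (qr - 1)]

set_option maxHeartbeats 2000000 in
lemma key (n : ℕ) : ∀ i, (M8 ^ (n + 1)) i 0 = col8 n i := by
  induction n with
  | zero =>
      intro i
      have h1 := hq1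
      have h2 := hD
      have h2' : (qr ^ 3 - 3 * qr ^ 2 + 4 * qr - 1 : RatFunc ℚ) ≠ 0 := by
        have e : qr * (qr ^ 2 - 2 * qr + 2) - (qr - 1) ^ 2
            = qr ^ 3 - 3 * qr ^ 2 + 4 * qr - 1 := by ring
        rw [← e]; exact h2
      have h1' : (-1 + qr : RatFunc ℚ) ≠ 0 := by
        have e : qr - 1 = -1 + qr := by ring
        rw [← e]; exact h1
      have h2'' : (-1 + (qr * 4 - qr ^ 2 * 3) + qr ^ 3 : RatFunc ℚ) ≠ 0 := by
        have e : qr * (qr ^ 2 - 2 * qr + 2) - (qr - 1) ^ 2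
            = -1 + (qr * 4 - qr ^ 2 * 3) + qr ^ 3 := by ring
        rw [← e]; exact h2
      have h3' : (1 - qr * 5 + (qr ^ 2 * 7 - qr ^ 3 * 4) + qr ^ 4 : RatFunc ℚ) ≠ 0 := by
        have e : (qr - 1) * (qr * (qr ^ 2 - 2 * qr + 2) - (qr - 1) ^ 2)
            = 1 - qr * 5 + (qr ^ 2 * 7 - qr ^ 3 * 4) + qr ^ 4 := by ring
        rw [← e]; exact mul_ne_zero h1 h2
      have h4' : (qr * (qr * (qr - 2) + 2) - (qr - 1) ^ 2 : RatFunc ℚ) ≠ 0 := by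
        have e : qr * (qr ^ 2 - 2 * qr + 2) - (qr - 1) ^ 2
            = qr * (qr * (qr - 2) + 2) - (qr - 1) ^ 2 := by ring
        rw [← e]; exact h2
      fin_cases i <;>
        simp [M8, col8, cons_val_five, cons_val_six, cons_val_seven,
          Matrix.vecHead, Matrix.vecTail] <;>
        first
          | ring1
          | (field_simp [h1, h1', h2, h2', h2'', h3', h4']; all_goals ring1)
  | succ n ih =>
      intro i
      have h1 := hq1
      have h2 := hD
      have h2' : (qr ^ 3 - 3 * qr ^ 2 + 4 * qr - 1 : RatFunc ℚ) ≠ 0 := by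
        have e : qr * (qr ^ 2 - 2 * qr + 2) - (qr - 1) ^ 2
            = qr ^ 3 - 3 * qr ^ 2 + 4 * qr - 1 := by ring
        rw [← e]; exact h2
      have h1' : (-1 + qr : RatFunc ℚ) ≠ 0 := by
        have e : qr - 1 = -1 + qr := by ring
        rw [← e]; exact h1
      have h2'' : (-1 + (qr * 4 - qr ^ 2 * 3) + qr ^ 3 : RatFunc ℚ) ≠ 0 := by
        have e : qr * (qr ^ 2 - 2 * qr + 2) - (qr - 1) ^ 2
            = -1 + (qr * 4 - qr ^ 2 * 3) + qr ^ 3 := by ring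
        rw [← e]; exact h2
      have h3' : (1 - qr * 5 + (qr ^ 2 * 7 - qr ^ 3 * 4) + qr ^ 4 : RatFunc ℚ) ≠ 0 := by
        have e : (qr - 1) * (qr * (qr ^ 2 - 2 * qr + 2) - (qr - 1) ^ 2)
            = 1 - qr * 5 + (qr ^ 2 * 7 - qr ^ 3 * 4) + qr ^ 4 := by ring
        rw [← e]; exact mul_ne_zero h1 h2
      have h4' : (qr * (qr * (qr - 2) + 2) - (qr - 1) ^ 2 : RatFunc ℚ) ≠ 0 := by
        have e : qr * (qr ^ 2 - 2 * qr + 2) - (qr - 1) ^ 2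
            = qr * (qr * (qr - 2) + 2) - (qr - 1) ^ 2 := by ring
        rw [← e]; exact h2
      have hpow : M8 ^ (n + 1 + 1) = M8 * M8 ^ (n + 1) := by
        rw [pow_succ']
      have hA : ∀ x : RatFunc ℚ, x ^ (2 * (n + 1) + 2) = x ^ (2 * n + 2) * x ^ 2 := by
        intro x
        rw [show 2 * (n + 1) + 2 = (2 * n + 2) + 2 by ring, pow_add]
      have hB : qr ^ (2 * (n + 1)) = qr ^ (2 * n) * qr ^ 2 := by
        rw [show 2 * (n + 1) = 2 * n + 2 by ring, pow_add]
      have hL : ∀ x : RatFunc ℚ, x ^ (n + 1 + 1) = x ^ (n + 1) * x := by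
        intro x
        rw [pow_succ]
      fin_cases i <;>
      · rw [hpow, Matrix.mul_apply, Fin.sum_univ_eight]
        simp only [ih]
        simp [M8, col8, cons_val_five, cons_val_six, cons_val_seven,
          Matrix.vecHead, Matrix.vecTail]
        try simp only [hA, hB, hL]
        all_goals
          first
          | ring1
          | (field_simp [h1, h1', h2, h2', h2'', h3', h4']; all_goals ring1)
  
/-- The first four entries of the first column of `M8 ^ g`. -/
theorem stmt8 (g : ℕ) (hg : 1 ≤ g) :
    (M8 ^ g) 0 0 = 1 ∧
    (M8 ^ g) 1 0 = (qr - 1) ^ (2 * g) - 1 ∧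
    (M8 ^ g) 2 0 = (qr ^ (2 * g) - 1) / (qr - 1) ∧
    (M8 ^ g) 3 0 = ((qr ^ (2 * g - 2) - 1) * ((qr - 1) ^ (2 * g) - 1)) / (qr - 1) := by
  obtain ⟨n, rfl⟩ : ∃ n, g = n + 1 := ⟨g - 1, by omega⟩
  have h0 := key n 0
  have h1 := key n 1
  have h2 := key n 2
  have h3 := key n 3
  rw [h0, h1, h2, h3]
  have e1 : 2 * (n + 1) = 2 * n + 2 := by ring
  have e2 : 2 * (n + 1) - 2 = 2 * n := by omega
  rw [e2, e1]
  simp [col8]
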